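/- Let U be a graph such that both U and its complement are claw-free. Then for every pair x, y of distinct vertices of U, the set of vertices adjacent to x in U and adjacent to y in the complement of U (i.e., N_U(x) ∩ N_Ū(y)) has at most 2 elements. -/

import Mathlib

open SimpleGraph

/-- The claw `K_{1,3}`: vertex 0 joined to each of the pairwise
    nonadjacent vertices 1, 2, 3. -/
def claw : SimpleGraph (Fin 4) := SimpleGraph.fromRel (fun a _ => a = 0)

/-- A graph is claw-free if it has no induced subgraph isomorphic to `K_{1,3}`. -/
def ClawFree {V : Type*} (G : SimpleGraph V) : Prop := IsEmpty (claw ↪g G)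

def claw_emb {V : Type*} (G : SimpleGraph V) (c a b d : V)
    (hca : G.Adj c a) (hcb : G.Adj c b) (hcd : G.Adj c d)
    (hab : ¬G.Adj a b) (had : ¬G.Adj a d) (hbd : ¬G.Adj b d)
    (nab : a ≠ b) (nad : a ≠ d) (nbd : b ≠ d) : claw ↪g G := by
  have hba : ¬G.Adj b a := fun h => hab h.symm
  have hda : ¬G.Adj d a := fun h => had h.symm
  have hdb : ¬G.Adj d b := fun h => hbd h.symm
  refine ⟨⟨![c, a, b, d], ?_⟩, ?_⟩
  · intro i j hij
    fin_cases i <;> fin_cases j <;> simp_all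
  · intro i j
    show G.Adj (![c, a, b, d] i) (![c, a, b, d] j) ↔ claw.Adj i j
    fin_cases i <;> fin_cases j <;>
      simp_all [claw, hca.symm, hcb.symm, hcd.symm, G.loopless]

/-- If `U` and its complement are claw-free, then for distinct vertices `x, y`
    the set `N_U(x) ∩ N_{Uᶜ}(y)` has at most two elements. -/
theorem clawfree_common_neighborhood {V : Type*} [Fintype V] (U : SimpleGraph V)
    (h : ClawFree U ∧ ClawFree Uᶜ) (x y : V) (hxy : x ≠ y) :
    (U.neighborSet x ∩ Uᶜ.neighborSet y).ncard ≤ 2 := by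
  by_contra hc
  push_neg at hc
  obtain ⟨a, ha, b, hb, c, hcc, nab, nac, nbc⟩ := (Set.two_lt_ncard (Set.toFinite _)).mp hc
  simp only [Set.mem_inter_iff, mem_neighborSet, compl_adj] at ha hb hcc
  obtain ⟨hxa, hya, hyaN⟩ := ha
  obtain ⟨hxb, hyb, hybN⟩ := hb
  obtain ⟨hxc, hyc, hycN⟩ := hcc
  have noU : ∀ p q r : V, U.Adj x p → U.Adj x q → U.Adj x r → ¬U.Adj p q → ¬U.Adj p r →
      ¬U.Adj q r → p ≠ q → p ≠ r → q ≠ r → False :=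
    fun p q r h1 h2 h3 h4 h5 h6 h7 h8 h9 =>
      h.1.false (claw_emb U x p q r h1 h2 h3 h4 h5 h6 h7 h8 h9)
  have noUc : ∀ p q r : V, Uᶜ.Adj y p → Uᶜ.Adj y q → Uᶜ.Adj y r → ¬Uᶜ.Adj p q → ¬Uᶜ.Adj p r →
      ¬Uᶜ.Adj q r → p ≠ q → p ≠ r → q ≠ r → False :=
    fun p q r h1 h2 h3 h4 h5 h6 h7 h8 h9 =>
      h.2.false (claw_emb Uᶜ y p q r h1 h2 h3 h4 h5 h6 h7 h8 h9)
  have nUc : ∀ p q : V, U.Adj p q → ¬Uᶜ.Adj p q := fun p q hpq hn => hn.2 hpq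
  by_cases hxyU : U.Adj x y
  · by_cases hab : U.Adj a b
    · by_cases hac : U.Adj a c
      · by_cases hbc : U.Adj b c
        · exact noUc a b c ⟨hya, hyaN⟩ ⟨hyb, hybN⟩ ⟨hyc, hycN⟩
            (nUc a b hab) (nUc a c hac) (nUc b c hbc) nab nac nbc
        · exact noU b c y hxb hxc hxyU hbc (fun hh => hybN hh.symm)
            (fun hh => hycN hh.symm) nbc (Ne.symm hyb) (Ne.symm hyc)
      · exact noU a c y hxa hxc hxyU hac (fun hh => hyaN hh.symm)
          (fun hh => hycN hh.symm) nac (Ne.symm hya) (Ne.symm hyc)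
    · exact noU a b y hxa hxb hxyU hab (fun hh => hyaN hh.symm)
        (fun hh => hybN hh.symm) nab (Ne.symm hya) (Ne.symm hyb)
  · have hyx : Uᶜ.Adj y x := ⟨Ne.symm hxy, fun hh => hxyU hh.symm⟩
    by_cases hab : U.Adj a b
    · exact noUc x a b hyx ⟨hya, hyaN⟩ ⟨hyb, hybN⟩ (nUc x a hxa) (nUc x b hxb)
        (nUc a b hab) hxa.ne hxb.ne nab
    · by_cases hac : U.Adj a c
      · exact noUc x a c hyx ⟨hya, hyaN⟩ ⟨hyc, hycN⟩ (nUc x a hxa) (nUc x c hxc)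
          (nUc a c hac) hxa.ne hxc.ne nac
      · by_cases hbc : U.Adj b c
        · exact noUc x b c hyx ⟨hyb, hybN⟩ ⟨hyc, hycN⟩ (nUc x b hxb) (nUc x c hxc)
            (nUc b c hbc) hxb.ne hxc.ne nbc
        · exact noU a b c hxa hxb hxc hab hac hbc nab nac nbc
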